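/- Let (X_n)_{n≥0} be a uniformly bounded sequence of real random variables converging almost surely to X, and let (ℱ_n)_{n≥0} be a decreasing sequence of sub-σ-fields of 𝒜. Then E[X_n | ℱ_n] converges almost surely to E[X | ⋂_{n≥0} ℱ_n]. -/

import Mathlib

open MeasureTheory Filter Finset
open scoped NNReal ENNReal

namespace BMC
variable {Ω : Type*} [m0 : MeasurableSpace Ω] {μ : Measure Ω} [IsProbabilityMeasure μ]

lemma integrable_of_ae_bound {Y : Ω → ℝ} {M : ℝ} (hYm : AEStronglyMeasurable Y μ)
    (hYb : ∀ᵐ ω ∂μ, |Y ω| ≤ M) : Integrable Y μ :=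
  memLp_one_iff_integrable.1 <| MemLp.of_bound hYm M <| by
    filter_upwards [hYb] with ω h using by simpa [Real.norm_eq_abs] using h


lemma condexp_ae_bound {Y : Ω → ℝ} {M : ℝ} {m : MeasurableSpace Ω} (hm : m ≤ m0)
    (hYint : Integrable Y μ) (hYb : ∀ᵐ ω ∂μ, |Y ω| ≤ M) :
    ∀ᵐ ω ∂μ, |(μ[Y|m]) ω| ≤ M := by
  have h1 : μ[Y|m] ≤ᵐ[μ] μ[(fun _ => M)|m] :=
    condExp_mono hYint (integrable_const M)
      (by filter_upwards [hYb] with ω h using (abs_le.1 h).2)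
  have h3 : μ[(fun _ => (-M))|m] ≤ᵐ[μ] μ[Y|m] :=
    condExp_mono (integrable_const _) hYint
      (by filter_upwards [hYb] with ω h using (abs_le.1 h).1)
  rw [condExp_const hm M (μ := μ)] at h1
  rw [condExp_const hm (-M) (μ := μ)] at h3
  filter_upwards [h1, h3] with ω e1 e3
  rw [abs_le]
  exact ⟨e3, e1⟩


lemma sq_integral_abs_le {g : Ω → ℝ} (hg : Integrable g μ)
    (hg2 : Integrable (fun ω => g ω * g ω) μ) :
    (∫ ω, |g ω| ∂μ) ^ 2 ≤ ∫ ω, g ω * g ω ∂μ := by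
  set c := ∫ ω, |g ω| ∂μ with hc
  have h0 : 0 ≤ ∫ ω, (|g ω| - c) ^ 2 ∂μ := integral_nonneg fun ω => sq_nonneg _
  have hexp : ∫ ω, (|g ω| - c) ^ 2 ∂μ = (∫ ω, g ω * g ω ∂μ) - c ^ 2 := by
    have he : ∀ ω, (|g ω| - c) ^ 2 = g ω * g ω - (2 * c) * |g ω| + c ^ 2 := by
      intro ω
      have : |g ω| * |g ω| = g ω * g ω := abs_mul_abs_self _
      nlinarith [this]
    simp_rw [he]
    have hI2 : Integrable (fun ω => 2 * c * |g ω|) μ := hg.abs.const_mul _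
    have hI1 : Integrable (fun ω => g ω * g ω - 2 * c * |g ω|) μ := hg2.sub hI2
    rw [integral_add hI1 (integrable_const _), integral_sub hg2 hI2,
      integral_const_mul, integral_const]
    simp [measure_univ, ← hc]
    ring
  nlinarith [h0, hexp]


lemma maximal_aux (F : ℕ → MeasurableSpace Ω) (hFle : ∀ n, F n ≤ m0) (hFanti : Antitone F)
    (Y : Ω → ℝ) (hYint : Integrable Y μ) {n m : ℕ} (hnm : n ≤ m) (ε : ℝ≥0) :
    ε • μ {ω | ∃ j, n ≤ j ∧ j ≤ m ∧ (ε : ℝ) ≤ |(μ[Y|F j]) ω - (μ[Y|F m]) ω|} ≤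
      ENNReal.ofReal (∫ ω, |(μ[Y|F n]) ω - (μ[Y|F m]) ω| ∂μ) := by
  set f : ℕ → Ω → ℝ := fun k => μ[Y|F k] with hf
  have hFm_le : ∀ k, F m ≤ F (max (m - k) n) := fun k =>
    hFanti (max_le (Nat.sub_le m k) hnm)
  set 𝒢 : Filtration ℕ m0 :=
    { seq := fun k => F (max (m - k) n)
      mono' := fun k k' hk => hFanti (max_le_max (Nat.sub_le_sub_left hk m) le_rfl)
      le' := fun k => hFle _ } with h𝒢
  set g : ℕ → Ω → ℝ := fun k => f (max (m - k) n) - f m with hg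
  have hmg : Martingale g 𝒢 μ := by
    constructor
    · intro i
      exact stronglyMeasurable_condExp.sub (stronglyMeasurable_condExp.mono (hFm_le i))
    · intro i j hij
      have hab : max (m - j) n ≤ max (m - i) n :=
        max_le_max (Nat.sub_le_sub_left hij m) le_rfl
      have h1 : μ[f (max (m - j) n)|𝒢 i] =ᵐ[μ] f (max (m - i) n) :=
        condExp_condExp_of_le (hFanti hab) (hFle _)
      have h2 : μ[f m|𝒢 i] =ᵐ[μ] f m := by
        rw [show (𝒢 i : MeasurableSpace Ω) = F (max (m - i) n) from rfl,
          condExp_of_stronglyMeasurable (hFle _)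
            (stronglyMeasurable_condExp.mono (hFm_le i)) integrable_condExp]
      calc μ[g j|𝒢 i] =ᵐ[μ] μ[f (max (m - j) n)|𝒢 i] - μ[f m|𝒢 i] :=
            condExp_sub integrable_condExp integrable_condExp _
        _ =ᵐ[μ] f (max (m - i) n) - f m := h1.sub h2
  have hsub : Submartingale (g ⊔ -g) 𝒢 μ :=
    hmg.submartingale.sup hmg.neg.submartingale
  have hnonneg : 0 ≤ g ⊔ -g := by
    intro k ω
    simp only [Pi.sup_apply, Pi.neg_apply, Pi.zero_apply, le_sup_iff]
    rcases le_total 0 (g k ω) with h | h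
    · exact Or.inl h
    · exact Or.inr (by linarith)
  have key := maximal_ineq hsub hnonneg (ε := ε) m
  have habs : ∀ k ω, (g ⊔ -g) k ω = |g k ω| := by
    intro k ω
    simp [Pi.sup_apply, Pi.neg_apply, abs_eq_max_neg, max_comm]
  have hgm : ∀ ω, g m ω = f n ω - f m ω := by
    intro ω
    simp only [hg, Pi.sub_apply, Nat.sub_self, max_eq_right (Nat.zero_le n)]
  refine le_trans ?_ (le_trans key ?_)
  · have hsubset : {ω | ∃ j, n ≤ j ∧ j ≤ m ∧ (ε : ℝ) ≤ |(μ[Y|F j]) ω - (μ[Y|F m]) ω|} ⊆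
        {ω | (ε : ℝ) ≤ (range (m + 1)).sup' nonempty_range_add_one fun k => (g ⊔ -g) k ω} := by
      rintro ω ⟨j, hj1, hj2, hj3⟩
      have hk : m - j ∈ range (m + 1) := mem_range.2 (Nat.lt_succ_of_le (Nat.sub_le m j))
      have hmj : max (m - (m - j)) n = j := by
        rw [Nat.sub_sub_self hj2]; exact max_eq_left hj1
      refine le_trans ?_ (Finset.le_sup' (fun k => (g ⊔ -g) k ω) hk)
      rw [habs]
      simp only [hg, Pi.sub_apply, hmj]
      exact hj3
    rw [ENNReal.smul_def]
    exact mul_le_mul_right (measure_mono hsubset) _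
  · refine ENNReal.ofReal_le_ofReal ?_
    have hint : Integrable ((g ⊔ -g) m) μ := by
      have he : (g ⊔ -g) m = fun ω => |g m ω| := funext (habs m)
      rw [he]
      exact (integrable_condExp.sub integrable_condExp).abs
    calc ∫ ω in {ω | (ε : ℝ) ≤ (range (m + 1)).sup' nonempty_range_add_one
            fun k => (g ⊔ -g) k ω}, (g ⊔ -g) m ω ∂μ
        ≤ ∫ ω, (g ⊔ -g) m ω ∂μ :=
          setIntegral_le_integral hint
            (Eventually.of_forall fun ω => by rw [habs]; exact abs_nonneg _)
      _ = ∫ ω, |(μ[Y|F n]) ω - (μ[Y|F m]) ω| ∂μ := by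
          refine integral_congr_ae (Eventually.of_forall fun ω => ?_)
          rw [habs, hgm]

theorem cauchy_L1 (F : ℕ → MeasurableSpace Ω) (hFle : ∀ n, F n ≤ m0)
    (hFanti : Antitone F) (Y : Ω → ℝ) (hYm : AEStronglyMeasurable Y μ) (M : ℝ)
    (hYb : ∀ᵐ ω ∂μ, |Y ω| ≤ M) :
    ∀ ε > (0:ℝ), ∃ N : ℕ, ∀ n m : ℕ, N ≤ n → n ≤ m →
      ∫ ω, |(μ[Y|F n]) ω - (μ[Y|F m]) ω| ∂μ ≤ ε := by
  have hYint : Integrable Y μ := integrable_of_ae_bound hYm hYb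
  set f : ℕ → Ω → ℝ := fun k => μ[Y|F k] with hf
  have hfb : ∀ k, ∀ᵐ ω ∂μ, |f k ω| ≤ M := fun k => condexp_ae_bound (hFle k) hYint hYb
  have hfm : ∀ k, AEStronglyMeasurable (f k) μ := fun k =>
    (stronglyMeasurable_condExp.mono (hFle k)).aestronglyMeasurable
  -- product integrability
  have hprod : ∀ k l : ℕ, Integrable (fun ω => f k ω * f l ω) μ := by
    intro k l
    refine integrable_of_ae_bound ((hfm k).mul (hfm l)) (M := M * M) ?_
    filter_upwards [hfb k, hfb l] with ω h1 h2
    rw [abs_mul]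
    exact mul_le_mul h1 h2 (abs_nonneg _) ((abs_nonneg _).trans h1)
  -- orthogonality
  have horth : ∀ n m : ℕ, n ≤ m → ∫ ω, f m ω * f n ω ∂μ = ∫ ω, f m ω * f m ω ∂μ := by
    intro n m hnm
    have htow : μ[f n|F m] =ᵐ[μ] f m := condExp_condExp_of_le (hFanti hnm) (hFle n)
    have hmul : μ[(fun ω => f m ω * f n ω)|F m] =ᵐ[μ] fun ω => f m ω * (μ[f n|F m]) ω := by
      have := condExp_mul_of_stronglyMeasurable_left (μ := μ) (m := F m)
        stronglyMeasurable_condExp (hprod m n) integrable_condExp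
      exact this
    calc ∫ ω, f m ω * f n ω ∂μ
        = ∫ ω, (μ[(fun ω => f m ω * f n ω)|F m]) ω ∂μ := (integral_condExp (hFle m)).symm
      _ = ∫ ω, f m ω * (μ[f n|F m]) ω ∂μ := integral_congr_ae hmul
      _ = ∫ ω, f m ω * f m ω ∂μ := integral_congr_ae (by
          filter_upwards [htow] with ω h; rw [h])
  set φ : ℕ → ℝ := fun k => ∫ ω, f k ω * f k ω ∂μ with hφ
  have hsq : ∀ n m : ℕ, n ≤ m →
      ∫ ω, (f n ω - f m ω) * (f n ω - f m ω) ∂μ = φ n - φ m := by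
    intro n m hnm
    have he : ∀ ω, (f n ω - f m ω) * (f n ω - f m ω) =
        f n ω * f n ω - (2:ℝ) * (f m ω * f n ω) + f m ω * f m ω := by intro ω; ring
    simp_rw [he]
    have hI2 : Integrable (fun ω => (2:ℝ) * (f m ω * f n ω)) μ := (hprod m n).const_mul _
    have hI1 : Integrable (fun ω => f n ω * f n ω - (2:ℝ) * (f m ω * f n ω)) μ :=
      (hprod n n).sub hI2
    rw [integral_add hI1 (hprod m m), integral_sub (hprod n n) hI2, integral_const_mul,
      horth n m hnm]
    simp only [hφ]
    ring
  have hφanti : Antitone φ := by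
    intro n m hnm
    have h0 : 0 ≤ ∫ ω, (f n ω - f m ω) * (f n ω - f m ω) ∂μ :=
      integral_nonneg fun ω => mul_self_nonneg _
    rw [hsq n m hnm] at h0
    linarith
  have hφbdd : ∀ k, 0 ≤ φ k := fun k => integral_nonneg fun ω => mul_self_nonneg _
  have hφtend : Tendsto φ atTop (nhds (⨅ k, φ k)) :=
    tendsto_atTop_ciInf hφanti ⟨0, fun x ⟨k, hk⟩ => hk ▸ hφbdd k⟩
  have hφcauchy : CauchySeq φ := hφtend.cauchySeq
  intro ε hε
  obtain ⟨N, hN⟩ := Metric.cauchySeq_iff'.1 hφcauchy (ε ^ 2 / 2) (by positivity)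
  refine ⟨N, fun n m hn hnm => ?_⟩
  have h1 : φ n - φ m < ε ^ 2 := by
    have hNn := hN n hn
    have hNm := hN m (hn.trans hnm)
    rw [Real.dist_eq] at hNn hNm
    have h1' := abs_lt.1 hNn
    have h2' := abs_lt.1 hNm
    linarith [h1'.1, h1'.2, h2'.1, h2'.2]
  have h2 : (∫ ω, |f n ω - f m ω| ∂μ) ^ 2 ≤ φ n - φ m := by
    rw [← hsq n m hnm]
    exact sq_integral_abs_le ((integrable_condExp.sub integrable_condExp))
      (by
        have : ∀ ω, (f n ω - f m ω) * (f n ω - f m ω) =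
            f n ω * f n ω - (2:ℝ) * (f m ω * f n ω) + f m ω * f m ω := fun ω => by ring
        simp_rw [this]
        exact (((hprod n n).sub ((hprod m n).const_mul _)).add (hprod m m)))
  nlinarith [integral_nonneg (f := fun ω => |f n ω - f m ω|) (fun ω => abs_nonneg (f n ω - f m ω)) (μ := μ), h1, h2]


theorem tendsto_condexp_antitone (F : ℕ → MeasurableSpace Ω) (hFle : ∀ n, F n ≤ m0)
    (hFanti : Antitone F) (Y : Ω → ℝ) (hYm : AEStronglyMeasurable Y μ) (M : ℝ)
    (hYb : ∀ᵐ ω ∂μ, |Y ω| ≤ M) :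
    ∀ᵐ ω ∂μ, Tendsto (fun n => (μ[Y|F n]) ω) atTop (nhds ((μ[Y|⨅ n, F n]) ω)) := by
  have hYint : Integrable Y μ := integrable_of_ae_bound hYm hYb
  set f : ℕ → Ω → ℝ := fun k => μ[Y|F k] with hf
  have hfb : ∀ k, ∀ᵐ ω ∂μ, |f k ω| ≤ M := fun k => condexp_ae_bound (hFle k) hYint hYb
  have hfm : ∀ k, AEStronglyMeasurable (f k) μ := fun k =>
    (stronglyMeasurable_condExp.mono (hFle k)).aestronglyMeasurable
  -- choice of good indices
  have hNex : ∀ j : ℕ, ∃ N : ℕ, ∀ n m : ℕ, N ≤ n → n ≤ m →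
      ∫ ω, |f n ω - f m ω| ∂μ ≤ (8:ℝ)⁻¹ ^ j :=
    fun j => cauchy_L1 F hFle hFanti Y hYm M hYb ((8:ℝ)⁻¹ ^ j) (by positivity)
  choose N hNspec using hNex
  -- the bad events
  set D : ℕ → Set Ω := fun j =>
    {ω | ∃ k l : ℕ, N j ≤ k ∧ N j ≤ l ∧ 2 * (2:ℝ)⁻¹ ^ j ≤ |f k ω - f l ω|} with hD
  have hDbound : ∀ j, μ (D j) ≤ ENNReal.ofReal ((4:ℝ)⁻¹ ^ j) := by
    intro j
    set Dm : ℕ → Set Ω := fun m =>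
      {ω | ∃ k l : ℕ, N j ≤ k ∧ k ≤ m ∧ N j ≤ l ∧ l ≤ m ∧
        2 * (2:ℝ)⁻¹ ^ j ≤ |f k ω - f l ω|} with hDm
    have hDmono : Monotone Dm := by
      intro a b hab ω ⟨k, l, h1, h2, h3, h4, h5⟩
      exact ⟨k, l, h1, h2.trans hab, h3, h4.trans hab, h5⟩
    have hDeq : D j = ⋃ m, Dm m := by
      ext ω
      constructor
      · rintro ⟨k, l, h1, h2, h3⟩
        exact Set.mem_iUnion.2 ⟨max k l, k, l, h1, le_max_left _ _, h2, le_max_right _ _, h3⟩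
      · rintro h
        obtain ⟨m, k, l, h1, _, h3, _, h5⟩ := Set.mem_iUnion.1 h
        exact ⟨k, l, h1, h3, h5⟩
    have hDmB : ∀ m : ℕ, μ (Dm m) ≤ ENNReal.ofReal ((4:ℝ)⁻¹ ^ j) := by
      intro m
      set m' : ℕ := max m (N j) with hm'
      set S : Set Ω := {ω | ∃ i, N j ≤ i ∧ i ≤ m' ∧
        (((2:ℝ≥0)⁻¹ ^ j : ℝ≥0) : ℝ) ≤ |f i ω - f m' ω|} with hS
      have hsub : Dm m ⊆ S := by
        rintro ω ⟨k, l, h1, h2, h3, h4, h5⟩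
        have hkm : k ≤ m' := h2.trans (le_max_left _ _)
        have hlm : l ≤ m' := h4.trans (le_max_left _ _)
        have hcoe : (((2:ℝ≥0)⁻¹ ^ j : ℝ≥0) : ℝ) = (2:ℝ)⁻¹ ^ j := by
          push_cast; norm_num
        have htri : 2 * (2:ℝ)⁻¹ ^ j ≤ |f k ω - f m' ω| + |f l ω - f m' ω| := by
          calc 2 * (2:ℝ)⁻¹ ^ j ≤ |f k ω - f l ω| := h5
            _ ≤ |f k ω - f m' ω| + |f m' ω - f l ω| := abs_sub_le _ _ _
            _ = |f k ω - f m' ω| + |f l ω - f m' ω| := by rw [abs_sub_comm (f m' ω)]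
        rcases le_total (|f k ω - f m' ω|) (|f l ω - f m' ω|) with h | h
        · exact ⟨l, h3, hlm, by rw [hcoe]; linarith⟩
        · exact ⟨k, h1, hkm, by rw [hcoe]; linarith⟩
      have hmax := maximal_aux F hFle hFanti Y hYint (le_max_right m (N j)) ((2:ℝ≥0)⁻¹ ^ j)
      have hL1 : ∫ ω, |f (N j) ω - f m' ω| ∂μ ≤ (8:ℝ)⁻¹ ^ j :=
        hNspec j (N j) m' le_rfl (le_max_right _ _)
      have h1 : ((2:ℝ≥0)⁻¹ ^ j : ℝ≥0∞) * μ S ≤ ENNReal.ofReal ((8:ℝ)⁻¹ ^ j) := by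
        refine le_trans ?_ (le_trans hmax (ENNReal.ofReal_le_ofReal hL1))
        rw [ENNReal.smul_def]
        exact le_rfl
      have hne : ((2:ℝ≥0)⁻¹ ^ j : ℝ≥0∞) ≠ 0 := by positivity
      have hnetop : ((2:ℝ≥0)⁻¹ ^ j : ℝ≥0∞) ≠ ∞ := ENNReal.coe_ne_top
      have h2 : μ S ≤ (((2:ℝ≥0)⁻¹ ^ j : ℝ≥0∞))⁻¹ * ENNReal.ofReal ((8:ℝ)⁻¹ ^ j) := by
        rw [← one_mul (μ S), ← ENNReal.inv_mul_cancel hne hnetop, mul_assoc]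
        exact mul_le_mul_right h1 _
      have h3 : (((2:ℝ≥0)⁻¹ ^ j : ℝ≥0∞))⁻¹ * ENNReal.ofReal ((8:ℝ)⁻¹ ^ j) =
          ENNReal.ofReal ((4:ℝ)⁻¹ ^ j) := by
        rw [show ((2:ℝ≥0)⁻¹ ^ j : ℝ≥0∞) = ENNReal.ofReal ((2:ℝ)⁻¹ ^ j) by
          rw [ENNReal.ofReal_pow (by norm_num), ENNReal.ofReal_inv_of_pos (by norm_num)]
          push_cast
          norm_num]
        rw [← ENNReal.ofReal_inv_of_pos (by positivity), ← ENNReal.ofReal_mul (by positivity)]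
        congr 1
        rw [← inv_pow, inv_inv, ← mul_pow]
        norm_num
      exact le_trans (measure_mono hsub) (h2.trans_eq h3)
    rw [hDeq, (hDmono.directed_le).measure_iUnion]
    exact iSup_le hDmB
  -- Borel--Cantelli
  have hsum : (∑' j, μ (D j)) ≠ ∞ := by
    refine ne_top_of_le_ne_top ?_ (ENNReal.tsum_le_tsum hDbound)
    have hre : ∀ j : ℕ, ENNReal.ofReal ((4:ℝ)⁻¹ ^ j) = ENNReal.ofReal ((4:ℝ)⁻¹) ^ j :=
      fun j => ENNReal.ofReal_pow (by norm_num) j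
    simp_rw [hre]
    rw [ENNReal.tsum_geometric]
    refine ENNReal.inv_ne_top.2 ?_
    rw [Ne, tsub_eq_zero_iff_le]
    exact not_le.2 (ENNReal.ofReal_lt_one.2 (by norm_num))
  have hBC : ∀ᵐ ω ∂μ, ∀ᶠ j in atTop, ω ∉ D j := ae_eventually_notMem hsum
  -- a.e. Cauchy
  have hCauchy : ∀ᵐ ω ∂μ, ∃ c : ℝ, Tendsto (fun n => f n ω) atTop (nhds c) := by
    filter_upwards [hBC] with ω hω
    have hc : CauchySeq fun n => f n ω := by
      rw [Metric.cauchySeq_iff']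
      intro δ hδ
      obtain ⟨J, hJ⟩ := eventually_atTop.1 hω
      obtain ⟨j0, hj0⟩ : ∃ j : ℕ, 2 * (2:ℝ)⁻¹ ^ j < δ := by
        obtain ⟨j, hj⟩ := exists_pow_lt_of_lt_one (x := δ / 2) (y := (2:ℝ)⁻¹)
          (by linarith) (by norm_num)
        exact ⟨j, by linarith⟩
      set j : ℕ := max j0 J with hj
      refine ⟨N j, fun n hn => ?_⟩
      rw [Real.dist_eq]
      by_contra hcon
      push_neg at hcon
      refine hJ j (le_max_right _ _) ⟨n, N j, hn, le_rfl, ?_⟩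
      have hpow : (2:ℝ)⁻¹ ^ j ≤ (2:ℝ)⁻¹ ^ j0 :=
        pow_le_pow_of_le_one (by norm_num) (by norm_num) (le_max_left _ _)
      nlinarith [hcon]
    exact cauchySeq_tendsto_of_complete hc
  -- the limit function
  set flim : Ω → ℝ := fun ω => limsup (fun n => f n ω) atTop with hflimdef
  have hflim : ∀ᵐ ω ∂μ, Tendsto (fun n => f n ω) atTop (nhds (flim ω)) := by
    filter_upwards [hCauchy] with ω hω
    obtain ⟨c, hc⟩ := hω
    rwa [show flim ω = c from hc.limsup_eq]
  -- measurability of the limit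
  have hmeasF : ∀ k, Measurable[F k] flim := by
    intro k
    have he : flim = fun ω => limsup (fun n => f (n + k) ω) atTop :=
      funext fun ω => (limsup_nat_add (fun n => f n ω) k).symm
    rw [he]
    exact Measurable.limsup fun n =>
      (stronglyMeasurable_condExp.mono (hFanti (Nat.le_add_left k n))).measurable
  have hle_inf : (⨅ n, F n) ≤ m0 := (iInf_le F 0).trans (hFle 0)
  have hmeas_inf : Measurable[⨅ n, F n] flim := by
    intro t ht
    exact MeasurableSpace.measurableSet_iInf.2 fun n => hmeasF n ht
  have hflimb : ∀ᵐ ω ∂μ, |flim ω| ≤ M := by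
    filter_upwards [hflim, ae_all_iff.2 hfb] with ω h1 h2
    exact le_of_tendsto h1.abs (Eventually.of_forall fun n => h2 n)
  have hflim_int : Integrable flim μ :=
    integrable_of_ae_bound
      ((hmeas_inf.mono hle_inf le_rfl).stronglyMeasurable.aestronglyMeasurable) hflimb
  -- identification of the limit
  have hid : flim =ᵐ[μ] μ[Y|⨅ n, F n] := by
    refine ae_eq_condExp_of_forall_setIntegral_eq hle_inf hYint
      (fun s _ _ => hflim_int.integrableOn) (fun s hs _ => ?_)
      (StronglyMeasurable.aestronglyMeasurable (hmeas_inf.stronglyMeasurable))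
    have hsn : ∀ n, MeasurableSet[F n] s := fun n => (iInf_le F n) s hs
    have h1 : ∀ n, ∫ ω in s, f n ω ∂μ = ∫ ω in s, Y ω ∂μ := fun n =>
      setIntegral_condExp (hFle n) hYint (hsn n)
    have h2 : Tendsto (fun n => ∫ ω in s, f n ω ∂μ) atTop (nhds (∫ ω in s, flim ω ∂μ)) := by
      refine tendsto_integral_of_dominated_convergence (fun _ => M)
        (fun n => (hfm n).restrict) (integrable_const M) (fun n => ?_) ?_
      · exact ae_restrict_of_ae (by
          filter_upwards [hfb n] with ω h using by rwa [Real.norm_eq_abs])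
      · exact ae_restrict_of_ae hflim
    have h3 : Tendsto (fun _ : ℕ => ∫ ω in s, Y ω ∂μ) atTop (nhds (∫ ω in s, Y ω ∂μ)) :=
      tendsto_const_nhds
    rw [← tendsto_nhds_unique (by simpa only [h1] using h2 : Tendsto
      (fun _ : ℕ => ∫ ω in s, Y ω ∂μ) atTop (nhds (∫ ω in s, flim ω ∂μ))) h3]
  filter_upwards [hflim, hid] with ω h1 h2
  rwa [← h2]


end BMC

open BMC

theorem stmt_3 {Ω : Type*} [m0 : MeasurableSpace Ω]
    (μ : Measure Ω) [IsProbabilityMeasure μ]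
    (X : ℕ → Ω → ℝ) (Xlim : Ω → ℝ) (F : ℕ → MeasurableSpace Ω)
    (hFle : ∀ n, F n ≤ m0) (hFanti : Antitone F)
    (hXmeas : ∀ n, Measurable (X n)) (M : ℝ)
    (hXbdd : ∀ n, ∀ᵐ ω ∂μ, |X n ω| ≤ M)
    (hconv : ∀ᵐ ω ∂μ, Tendsto (fun n => X n ω) atTop (nhds (Xlim ω))) :
    ∀ᵐ ω ∂μ, Tendsto (fun n => (μ[X n | F n]) ω) atTop
      (nhds ((μ[Xlim | ⨅ n, F n]) ω)) := by
  have hle_inf : (⨅ n, F n) ≤ m0 := (iInf_le F 0).trans (hFle 0)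
  -- measurable version of the limit
  have hXlim_aem : AEMeasurable Xlim μ :=
    aemeasurable_of_tendsto_metrizable_ae _ (fun n => (hXmeas n).aemeasurable) hconv
  set g : Ω → ℝ := hXlim_aem.mk Xlim with hgdef
  have hgmeas : Measurable g := hXlim_aem.measurable_mk
  have hgae : Xlim =ᵐ[μ] g := hXlim_aem.ae_eq_mk
  have hallb : ∀ᵐ ω ∂μ, ∀ n, |X n ω| ≤ M := ae_all_iff.2 hXbdd
  have hconvg : ∀ᵐ ω ∂μ, Tendsto (fun n => X n ω) atTop (nhds (g ω)) := by
    filter_upwards [hconv, hgae] with ω h1 h2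
    rwa [h2] at h1
  have hgb : ∀ᵐ ω ∂μ, |g ω| ≤ M := by
    filter_upwards [hconvg, hallb] with ω h1 h2
    exact le_of_tendsto h1.abs (Eventually.of_forall h2)
  have hgint : Integrable g μ := integrable_of_ae_bound hgmeas.aestronglyMeasurable hgb
  have hXint : ∀ n, Integrable (X n) μ := fun n =>
    integrable_of_ae_bound (hXmeas n).aestronglyMeasurable (hXbdd n)
  -- the dominating sequence
  set S : ℕ → Ω → ℝ≥0∞ := fun m ω => ⨆ k, (‖X (m + k) ω - g ω‖₊ : ℝ≥0∞) with hSdef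
  set Z : ℕ → Ω → ℝ := fun m ω => (S m ω).toReal with hZdef
  have hSmeas : ∀ m, Measurable (S m) := fun m =>
    Measurable.iSup fun k => ((hXmeas (m + k)).sub hgmeas).nnnorm.coe_nnreal_ennreal
  have hZmeas : ∀ m, Measurable (Z m) := fun m =>
    ENNReal.measurable_toReal.comp (hSmeas m)
  have hM0 : (0:ℝ) ≤ M := by
    have : (ae μ).NeBot := ae_neBot.2 (IsProbabilityMeasure.ne_zero μ)
    obtain ⟨ω, hω⟩ := (hXbdd 0).exists
    exact (abs_nonneg _).trans hω
  have hSb : ∀ᵐ ω ∂μ, ∀ m, S m ω ≤ ENNReal.ofReal (2 * M) := by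
    filter_upwards [hallb, hgb] with ω h1 h2
    intro m
    refine iSup_le fun k => ?_
    rw [← ENNReal.ofReal_coe_nnreal, coe_nnnorm]
    refine ENNReal.ofReal_le_ofReal ?_
    rw [Real.norm_eq_abs]
    calc |X (m + k) ω - g ω| ≤ |X (m + k) ω| + |g ω| := abs_sub _ _
      _ ≤ 2 * M := by linarith [h1 (m + k)]
  have hZ0 : ∀ m ω, 0 ≤ Z m ω := fun m ω => ENNReal.toReal_nonneg
  have hZb : ∀ m, ∀ᵐ ω ∂μ, |Z m ω| ≤ 2 * M := by
    intro m
    filter_upwards [hSb] with ω hb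
    rw [abs_of_nonneg (hZ0 m ω)]
    exact ENNReal.toReal_le_of_le_ofReal (by linarith) (hb m)
  have hZint : ∀ m, Integrable (Z m) μ := fun m =>
    integrable_of_ae_bound (hZmeas m).aestronglyMeasurable (hZb m)
  have hZanti : ∀ᵐ ω ∂μ, ∀ m m', m ≤ m' → Z m' ω ≤ Z m ω := by
    filter_upwards [hSb] with ω hb
    intro m m' h
    have hSle : S m' ω ≤ S m ω := by
      refine iSup_le fun k => ?_
      have he : m' + k = m + (m' - m + k) := by omega
      rw [he]
      exact le_iSup (fun k => (‖X (m + k) ω - g ω‖₊ : ℝ≥0∞)) (m' - m + k)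
    exact ENNReal.toReal_mono (ne_top_of_le_ne_top ENNReal.ofReal_ne_top (hb m)) hSle
  have hZtend : ∀ᵐ ω ∂μ, Tendsto (fun m => Z m ω) atTop (nhds 0) := by
    filter_upwards [hconvg, hSb] with ω h1 hb
    rw [Metric.tendsto_atTop]
    intro ε hε
    obtain ⟨Nn, hNn⟩ := Metric.tendsto_atTop.1 h1 (ε / 2) (by linarith)
    refine ⟨Nn, fun m hm => ?_⟩
    have hSm : S m ω ≤ ENNReal.ofReal (ε / 2) := by
      refine iSup_le fun k => ?_
      rw [← ENNReal.ofReal_coe_nnreal, coe_nnnorm]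
      refine ENNReal.ofReal_le_ofReal ?_
      have := hNn (m + k) (hm.trans (Nat.le_add_right m k))
      rw [Real.dist_eq] at this
      rw [Real.norm_eq_abs]
      linarith
    have : Z m ω ≤ ε / 2 := ENNReal.toReal_le_of_le_ofReal (by linarith) hSm
    rw [Real.dist_eq, sub_zero, abs_of_nonneg (hZ0 m ω)]
    linarith
  -- domination of |X n - g| by Z m for n ≥ m
  have hdom : ∀ m n, m ≤ n → ∀ᵐ ω ∂μ, |X n ω - g ω| ≤ Z m ω := by
    intro m n hmn
    filter_upwards [hSb] with ω hb
    have h1 : (‖X n ω - g ω‖₊ : ℝ≥0∞) ≤ S m ω := by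
      have he : n = m + (n - m) := by omega
      rw [he]
      exact le_iSup (fun k => (‖X (m + k) ω - g ω‖₊ : ℝ≥0∞)) (n - m)
    have h2 := ENNReal.toReal_mono (ne_top_of_le_ne_top ENNReal.ofReal_ne_top (hb m)) h1
    rwa [ENNReal.coe_toReal, coe_nnnorm, Real.norm_eq_abs] at h2
  -- backward convergence for g and each Z m
  have hg_conv := tendsto_condexp_antitone F hFle hFanti g
    hgmeas.aestronglyMeasurable M hgb
  have hZ_conv : ∀ᵐ ω ∂μ, ∀ m, Tendsto (fun n => (μ[Z m|F n]) ω) atTop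
      (nhds ((μ[Z m|⨅ n, F n]) ω)) :=
    ae_all_iff.2 fun m => tendsto_condexp_antitone F hFle hFanti (Z m)
      (hZmeas m).aestronglyMeasurable (2 * M) (hZb m)
  -- the conditional expectations at the tail σ-algebra tend to 0
  set W : ℕ → Ω → ℝ := fun m => μ[Z m|⨅ n, F n] with hWdef
  have hWanti : ∀ᵐ ω ∂μ, ∀ m m', m ≤ m' → W m' ω ≤ W m ω := by
    rw [ae_all_iff]
    intro m
    rw [ae_all_iff]
    intro m'
    by_cases h : m ≤ m'
    · have := condExp_mono (m := ⨅ n, F n) (hZint m') (hZint m)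
        ((hZanti).mono fun ω hω => hω m m' h)
      filter_upwards [this] with ω hω _
      exact hω
    · exact Eventually.of_forall fun ω h' => absurd h' h
  have hWnonneg : ∀ᵐ ω ∂μ, ∀ m, 0 ≤ W m ω :=
    ae_all_iff.2 fun m => condExp_nonneg (Eventually.of_forall (hZ0 m))
  have hWb : ∀ m, ∀ᵐ ω ∂μ, |W m ω| ≤ 2 * M := fun m =>
    condexp_ae_bound hle_inf (hZint m) (hZb m)
  set c : Ω → ℝ := fun ω => liminf (fun m => W m ω) atTop with hcdef
  have hWmeas : ∀ m, AEStronglyMeasurable (W m) μ := fun m =>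
    (stronglyMeasurable_condExp.mono hle_inf).aestronglyMeasurable
  have hcmeas : Measurable c :=
    Measurable.liminf fun m => (stronglyMeasurable_condExp.mono hle_inf).measurable
  have hWtend : ∀ᵐ ω ∂μ, Tendsto (fun m => W m ω) atTop (nhds (c ω)) := by
    filter_upwards [hWanti, hWnonneg] with ω h1 h2
    have hanti : Antitone fun m => W m ω := fun a b hab => h1 a b hab
    have hbdd : BddBelow (Set.range fun m => W m ω) :=
      ⟨0, fun x ⟨k, hk⟩ => hk ▸ h2 k⟩
    have ht := tendsto_atTop_ciInf hanti hbdd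
    rwa [show c ω = ⨅ m, W m ω from ht.liminf_eq]
  have hcb : ∀ᵐ ω ∂μ, |c ω| ≤ 2 * M := by
    filter_upwards [hWtend, ae_all_iff.2 hWb] with ω h1 h2
    exact le_of_tendsto h1.abs (Eventually.of_forall h2)
  have hcint : Integrable c μ := integrable_of_ae_bound hcmeas.aestronglyMeasurable hcb
  have hintW : Tendsto (fun m => ∫ ω, W m ω ∂μ) atTop (nhds (∫ ω, c ω ∂μ)) := by
    refine tendsto_integral_of_dominated_convergence (fun _ => 2 * M) hWmeas
      (integrable_const _) (fun m => ?_) hWtend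
    filter_upwards [hWb m] with ω h using by rwa [Real.norm_eq_abs]
  have hintZ : Tendsto (fun m => ∫ ω, Z m ω ∂μ) atTop (nhds 0) := by
    have := tendsto_integral_of_dominated_convergence (f := fun _ => (0:ℝ)) (fun _ => 2 * M)
      (fun m => (hZmeas m).aestronglyMeasurable) (integrable_const _)
      (fun m => by filter_upwards [hZb m] with ω h using by rwa [Real.norm_eq_abs])
      hZtend
    simpa using this
  have hWint_eq : ∀ m, ∫ ω, W m ω ∂μ = ∫ ω, Z m ω ∂μ := fun m =>
    integral_condExp hle_inf
  have hintc : ∫ ω, c ω ∂μ = 0 := by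
    refine tendsto_nhds_unique ?_ hintZ
    simpa only [hWint_eq] using hintW
  have hc0 : c =ᵐ[μ] 0 := by
    have hcnonneg : 0 ≤ᵐ[μ] c := by
      filter_upwards [hWtend, hWnonneg] with ω h1 h2
      exact ge_of_tendsto h1 (Eventually.of_forall h2)
    exact (integral_eq_zero_iff_of_nonneg_ae hcnonneg hcint).1 hintc
  have hWto0 : ∀ᵐ ω ∂μ, Tendsto (fun m => W m ω) atTop (nhds 0) := by
    filter_upwards [hWtend, hc0] with ω h1 h2
    rwa [h2] at h1
  -- key domination of the conditional expectations
  have hkey : ∀ᵐ ω ∂μ, ∀ m n, m ≤ n →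
      |(μ[X n|F n]) ω - (μ[g|F n]) ω| ≤ (μ[Z m|F n]) ω := by
    rw [ae_all_iff]
    intro m
    rw [ae_all_iff]
    intro n
    by_cases h : m ≤ n
    · have hXg_int : Integrable (X n - g) μ := (hXint n).sub hgint
      have h2 : μ[X n - g|F n] ≤ᵐ[μ] μ[Z m|F n] :=
        condExp_mono hXg_int (hZint m)
          (by filter_upwards [hdom m n h] with ω hω
              exact (abs_le.1 hω).2)
      have h3 : μ[-(Z m)|F n] ≤ᵐ[μ] μ[X n - g|F n] :=
        condExp_mono (hZint m).neg hXg_int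
          (by filter_upwards [hdom m n h] with ω hω
              exact (abs_le.1 hω).1)
      have h4 : μ[X n - g|F n] =ᵐ[μ] μ[X n|F n] - μ[g|F n] :=
        condExp_sub (hXint n) hgint _
      have h5 : μ[-(Z m)|F n] =ᵐ[μ] -(μ[Z m|F n]) := condExp_neg (Z m) (F n)
      filter_upwards [h2, h3, h4, h5] with ω e2 e3 e4 e5 _
      have e4' : (μ[X n - g|F n]) ω = (μ[X n|F n]) ω - (μ[g|F n]) ω := by
        rw [e4]; rfl
      have e5' : (μ[-(Z m)|F n]) ω = -((μ[Z m|F n]) ω) := by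
        rw [e5]; rfl
      rw [abs_le]
      constructor
      · rw [← e4']
        rw [e5'] at e3
        linarith
      · rw [← e4']
        exact e2
    · exact Eventually.of_forall fun ω h' => absurd h' h
  -- the target conditional expectation
  have hcond_eq : μ[Xlim|⨅ n, F n] =ᵐ[μ] μ[g|⨅ n, F n] := condExp_congr_ae hgae
  -- final assembly
  filter_upwards [hg_conv, hZ_conv, hWto0, hkey, hcond_eq] with ω hgc hZc hW0 hk hce
  rw [hce]
  have hdiff : Tendsto (fun n => (μ[X n|F n]) ω - (μ[g|F n]) ω) atTop (nhds 0) := by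
    rw [NormedAddCommGroup.tendsto_nhds_zero]
    intro ε hε
    obtain ⟨m, hm⟩ : ∃ m, W m ω < ε / 2 :=
      ((hW0.eventually (gt_mem_nhds (by linarith : (0:ℝ) < ε / 2)))).exists
    have h2 : ∀ᶠ n in atTop, (μ[Z m|F n]) ω < ε := by
      have := (hZc m).eventually (gt_mem_nhds (show W m ω < ε by linarith))
      exact this
    filter_upwards [h2, eventually_ge_atTop m] with n hn1 hn2
    rw [Real.norm_eq_abs]
    exact lt_of_le_of_lt (hk m n hn2) hn1
  have := hdiff.add hgc
  simpa using this
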